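/- Let g ∈ F_m \ {e} and let x ∈ F_m with x ∉ C_fin(g). Then x⁻¹·C_fin(g) = C_fin(x⁻¹·g), i.e. the set {x⁻¹·h : h ∈ C_fin(g)} equals C_fin(x⁻¹·g). -/

import Mathlib

namespace Stmt5Aux

open FreeGroup List

variable {α : Type*} [DecidableEq α]

/-- The non-cancellation relation between adjacent letters. -/
def P : (α × Bool) → (α × Bool) → Prop := fun a b => ¬(a.1 = b.1 ∧ a.2 = !b.2)

theorem reduce_eq_self_iff (L : List (α × Bool)) :
    reduce L = L ↔ Chain' (P (α := α)) L := by
  induction L with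
  | nil => simp [Chain']
  | cons x L ih =>
    rw [FreeGroup.reduce.cons]
    rcases hL : reduce L with _ | ⟨y, M⟩
    · show [x] = x :: L ↔ Chain' P (x :: L)
      constructor
      · intro h
        obtain rfl : L = [] := by simpa using (congrArg List.tail h).symm
        simp [Chain']
      · intro h
        have hL' : reduce L = L := ih.2 h.tail
        rw [hL'] at hL; subst hL; rfl
    · show (if x.1 = y.1 ∧ x.2 = !y.2 then M else x :: y :: M) = x :: L ↔ Chain' P (x :: L)
      by_cases hc : x.1 = y.1 ∧ x.2 = !y.2
      · rw [if_pos hc]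
        constructor
        · intro h
          exfalso
          have h1 : M.length + 1 = (reduce L).length := by rw [hL]; simp
          have h2 : (reduce L).length ≤ L.length :=
            (FreeGroup.Red.sublist (FreeGroup.reduce.red)).length_le
          have h3 := congrArg List.length h
          simp at h3
          omega
        · intro h
          exfalso
          have hL' : reduce L = L := ih.2 h.tail
          rw [hL'] at hL
          subst hL
          exact (List.isChain_cons_cons.1 h).1 hc
      · rw [if_neg hc]
        constructor
        · intro h
          obtain rfl : L = y :: M := by simpa using (congrArg List.tail h).symm
          exact List.isChain_cons_cons.2 ⟨hc, ih.1 hL⟩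
        · intro h
          have hL' : reduce L = L := ih.2 h.tail
          rw [hL'] at hL; subst hL; rfl

theorem invRev_cons (x : α × Bool) (L : List (α × Bool)) :
    invRev (x :: L) = invRev L ++ [(x.1, !x.2)] := by
  simp [invRev]

theorem invRev_append (L M : List (α × Bool)) :
    invRev (L ++ M) = invRev M ++ invRev L := by
  simp [invRev]

/-- Core cancellation lemma: multiplying two reduced words cancels a common middle part. -/
theorem cancel : ∀ n (L₁ L₂ : List (α × Bool)), L₁.length ≤ n →
    reduce L₁ = L₁ → reduce L₂ = L₂ →
    ∃ p c q, L₁ = p ++ invRev c ∧ L₂ = c ++ q ∧ reduce (L₁ ++ L₂) = p ++ q := by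
  intro n
  induction n with
  | zero =>
    intro L₁ L₂ hlen h1 h2
    have : L₁ = [] := List.length_eq_zero_iff.1 (Nat.le_zero.1 hlen)
    subst this
    exact ⟨[], [], L₂, by simp [invRev], by simp, by simpa using h2⟩
  | succ n ih =>
    intro L₁ L₂ hlen h1 h2
    by_cases hr : reduce (L₁ ++ L₂) = L₁ ++ L₂
    · exact ⟨L₁, [], L₂, by simp [invRev], by simp, by simp [hr]⟩
    · rw [reduce_eq_self_iff] at hr
      rw [reduce_eq_self_iff] at h1 h2
      simp only [Chain', List.isChain_append] at hr
      push_neg at hr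
      obtain ⟨a, ha, b, hb, hab⟩ := hr h1 h2
      simp only [P, not_not] at hab
      have hL₁ne : L₁ ≠ [] := by rintro rfl; simp at ha
      have hL₂ne : L₂ ≠ [] := by rintro rfl; simp at hb
      have ha' : a = L₁.getLast hL₁ne := by
        rw [List.getLast?_eq_getLast_of_ne_nil hL₁ne] at ha
        exact (Option.mem_some_iff.1 ha).symm
      have hb' : b = L₂.head hL₂ne := by
        rw [List.head?_eq_head hL₂ne] at hb
        exact (Option.mem_some_iff.1 hb).symm
      have hL₁ : L₁ = L₁.dropLast ++ [a] := by
        rw [ha']; exact (List.dropLast_append_getLast hL₁ne).symm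
      have hL₂ : L₂ = b :: L₂.tail := by
        rw [hb']; exact (List.cons_head_tail hL₂ne).symm
      have hstep : Red.Step (L₁ ++ L₂) (L₁.dropLast ++ L₂.tail) := by
        have habe : a = (b.1, !b.2) := by
          rcases a with ⟨a1, a2⟩; rcases b with ⟨b1, b2⟩
          simp at hab
          simp [hab.1, hab.2]
        have : L₁ ++ L₂ = L₁.dropLast ++ (b.1, !b.2) :: (b.1, !(!b.2)) :: L₂.tail := by
          conv_lhs => rw [hL₁, hL₂]
          simp [← habe]
        rw [this]
        exact Red.Step.not
      have hred : reduce (L₁ ++ L₂) = reduce (L₁.dropLast ++ L₂.tail) :=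
        FreeGroup.reduce.Step.eq hstep
      have h1' : reduce L₁.dropLast = L₁.dropLast := by
        rw [reduce_eq_self_iff]
        exact h1.prefix (List.dropLast_prefix _)
      have h2' : reduce L₂.tail = L₂.tail := by
        rw [reduce_eq_self_iff]
        exact h2.tail
      have hlen' : L₁.dropLast.length ≤ n := by
        have : L₁.length ≠ 0 := by simpa using hL₁ne
        rw [List.length_dropLast]
        omega
      obtain ⟨p, c, q, e1, e2, e3⟩ := ih L₁.dropLast L₂.tail hlen' h1' h2'
      refine ⟨p, b :: c, q, ?_, ?_, ?_⟩
      · rw [invRev_cons]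
        conv_lhs => rw [hL₁]
        rw [e1, List.append_assoc]
        congr 2
        rcases a with ⟨a1, a2⟩; rcases b with ⟨b1, b2⟩
        simp at hab
        simp [hab.1, hab.2]
      · conv_lhs => rw [hL₂]
        rw [e2]; rfl
      · rw [hred, e3]

theorem toWord_mul (u v : FreeGroup α) :
    (u * v).toWord = reduce (u.toWord ++ v.toWord) := by
  conv_lhs => rw [← FreeGroup.mk_toWord (x := u), ← FreeGroup.mk_toWord (x := v)]
  rw [FreeGroup.mul_mk, FreeGroup.toWord_mk]

theorem len_iff (u v : FreeGroup α) :
    (u * v).toWord.length = u.toWord.length + v.toWord.length ↔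
      reduce (u.toWord ++ v.toWord) = u.toWord ++ v.toWord := by
  rw [toWord_mul]
  constructor
  · intro h
    exact (FreeGroup.Red.sublist (FreeGroup.reduce.red)).eq_of_length (by simp [h])
  · intro h; rw [h]; simp

theorem key {A C : List (α × Bool)} (hA : reduce A = A) (hC : reduce C = C)
    (hq : A.getLast? = C.getLast?)
    (B : List (α × Bool)) (hB : reduce B = B) :
    reduce (A ++ B) = A ++ B ↔ reduce (C ++ B) = C ++ B := by
  rw [reduce_eq_self_iff, reduce_eq_self_iff]
  simp only [Chain', List.isChain_append]
  rw [reduce_eq_self_iff] at hA hC hB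
  simp only [Chain'] at hA hC hB
  simp [hA, hC, hB, hq]

end Stmt5Aux

/-- Word length in the free group on `Fin m` w.r.t. the generators and their inverses. -/
def wl {m : ℕ} (g : FreeGroup (Fin m)) : ℕ := g.toWord.length

/-- The shadow `C_fin(g) = {g·x : |g·x| = |g| + |x|}`. -/
def Cfin {m : ℕ} (g : FreeGroup (Fin m)) : Set (FreeGroup (Fin m)) :=
  {h | ∃ x, h = g * x ∧ wl (g * x) = wl g + wl x}

/-- for `g ≠ e` and `x ∉ C_fin(g)` one has `x⁻¹·C_fin(g) = C_fin(x⁻¹·g)`. -/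
theorem stmt5 {m : ℕ} (g : FreeGroup (Fin m)) (hg : g ≠ 1)
    (x : FreeGroup (Fin m)) (hx : x ∉ Cfin g) :
    (fun h => x⁻¹ * h) '' Cfin g = Cfin (x⁻¹ * g) := by
  classical
  open Stmt5Aux FreeGroup in
  obtain ⟨p, c, q, h1, h2, h3⟩ :=
    Stmt5Aux.cancel ((x⁻¹ : FreeGroup (Fin m)).toWord.length)
      (x⁻¹ : FreeGroup (Fin m)).toWord g.toWord le_rfl
      (FreeGroup.reduce_toWord _) (FreeGroup.reduce_toWord _)
  have hC : (x⁻¹ * g).toWord = p ++ q := by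
    rw [Stmt5Aux.toWord_mul, h3]
  have hAne : g.toWord ≠ [] := by
    simpa [FreeGroup.toWord_eq_nil_iff] using hg
  -- q ≠ [] : otherwise x ∈ Cfin g
  have hqne : q ≠ [] := by
    rintro rfl
    rw [List.append_nil] at h2
    apply hx
    refine ⟨g⁻¹ * x, by group, ?_⟩
    have hx' : x = g * (g⁻¹ * x) := by group
    have hwx : wl x = g.toWord.length + p.length := by
      have : x.toWord = FreeGroup.invRev ((x⁻¹ : FreeGroup (Fin m)).toWord) := by
        rw [← FreeGroup.toWord_inv, inv_inv]
      rw [wl, this, h1, ← h2, Stmt5Aux.invRev_append, FreeGroup.invRev_invRev]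
      simp [FreeGroup.invRev_length]
    have hwy : wl (g⁻¹ * x) = p.length := by
      have : (g⁻¹ * x) = (x⁻¹ * g)⁻¹ := by group
      rw [wl, this, FreeGroup.toWord_inv, FreeGroup.invRev_length, hC]
      simp
    rw [← hx', hwx, hwy, wl]
  have hCne : p ++ q ≠ [] := by simp [hqne]
  have hlast : g.toWord.getLast? = (p ++ q).getLast? := by
    obtain ⟨a, ha⟩ : ∃ a, q.getLast? = some a :=
      ⟨q.getLast hqne, List.getLast?_eq_getLast_of_ne_nil hqne⟩
    rw [h2, List.getLast?_append, List.getLast?_append, ha]; rfl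
  have hCred : FreeGroup.reduce (p ++ q) = p ++ q := by
    rw [← hC]; exact FreeGroup.reduce_toWord _
  -- the main equivalence
  have main : ∀ y : FreeGroup (Fin m),
      wl (g * y) = wl g + wl y ↔ wl ((x⁻¹ * g) * y) = wl (x⁻¹ * g) + wl y := by
    intro y
    have e1 : (wl (g * y) = wl g + wl y) ↔
        FreeGroup.reduce (g.toWord ++ y.toWord) = g.toWord ++ y.toWord :=
      Stmt5Aux.len_iff g y
    have e2 : (wl ((x⁻¹ * g) * y) = wl (x⁻¹ * g) + wl y) ↔
        FreeGroup.reduce ((x⁻¹ * g).toWord ++ y.toWord) = (x⁻¹ * g).toWord ++ y.toWord :=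
      Stmt5Aux.len_iff (x⁻¹ * g) y
    rw [e1, e2, hC]
    exact Stmt5Aux.key (FreeGroup.reduce_toWord g) hCred hlast
      y.toWord (FreeGroup.reduce_toWord y)
  ext h
  simp only [Set.mem_image, Cfin, Set.mem_setOf_eq]
  constructor
  · rintro ⟨h', ⟨y, rfl, hy⟩, rfl⟩
    exact ⟨y, by group, (main y).1 hy⟩
  · rintro ⟨y, rfl, hy⟩
    exact ⟨g * y, ⟨y, rfl, (main y).2 hy⟩, by group⟩
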